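/- Let H be a real inner product space, let F and G be subsets of H, and let θ ∈ [0,1). Suppose that |⟨f₁ − f₂, g₁ − g₂⟩| ≤ θ‖f₁ − f₂‖‖g₁ − g₂‖ for all f₁, f₂ ∈ F and g₁, g₂ ∈ G. Then the decomposition of any element of H as a sum of an element of F and an element of G is unique: if f₁, f₂ ∈ F and g₁, g₂ ∈ G satisfy f₁ + g₁ = f₂ + g₂, then f₁ = f₂ and g₁ = g₂. (Paper's Lemma 1: L₂-separable function classes yield an identifiable decomposition h = f* + g*.) -/
import Mathlib

open RealInnerProductSpace

/-- Paper's Lemma 1: if the classes `F` and `G` are `θ`-separable for some `θ ∈ [0,1)`,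
then the decomposition of an element as a sum of an element of `F` and an element of `G`
is unique. -/
theorem separable_decomposition_unique
    {H : Type*} [NormedAddCommGroup H] [InnerProductSpace ℝ H]
    (F G : Set H) (θ : ℝ) (hθ0 : 0 ≤ θ) (hθ1 : θ < 1)
    (hsep : ∀ f₁ ∈ F, ∀ f₂ ∈ F, ∀ g₁ ∈ G, ∀ g₂ ∈ G,
      |(⟪f₁ - f₂, g₁ - g₂⟫)| ≤ θ * (‖f₁ - f₂‖ * ‖g₁ - g₂‖))
    (f₁ f₂ g₁ g₂ : H) (hf₁ : f₁ ∈ F) (hf₂ : f₂ ∈ F) (hg₁ : g₁ ∈ G) (hg₂ : g₂ ∈ G)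
    (hsum : f₁ + g₁ = f₂ + g₂) :
    f₁ = f₂ ∧ g₁ = g₂ := by
  have hv : g₁ - g₂ = -(f₁ - f₂) := by
    have := hsum
    abel_nf
    linear_combination (norm := abel_nf) hsum
  have h := hsep f₁ hf₁ f₂ hf₂ g₁ hg₁ g₂ hg₂
  rw [hv] at h
  rw [inner_neg_right, real_inner_self_eq_norm_mul_norm, norm_neg] at h
  rw [abs_neg, abs_of_nonneg (mul_self_nonneg _)] at h
  have hn : ‖f₁ - f₂‖ = 0 := by
    by_contra hne
    have hpos : 0 < ‖f₁ - f₂‖ := lt_of_le_of_ne (norm_nonneg _) (Ne.symm hne)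
    nlinarith [mul_pos hpos hpos]
  have hf : f₁ = f₂ := by
    have := norm_eq_zero.mp hn; exact sub_eq_zero.mp this
  refine ⟨hf, ?_⟩
  have : g₁ - g₂ = 0 := by rw [hv, hf]; simp
  exact sub_eq_zero.mp this
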